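/- Fix c ∈ F_2^n with wt(c) = r, and natural numbers u, e, e_1, a, b, λ, γ satisfying r + b = u + e − e_1 + a. Then the number of triples (U, E, p), where E ⊆ {0,…,n−1} with |E| = e, U ⊆ {0,…,n−1} with U ∩ E = ∅ and |U| = u, and p : E → F_2 with wt(p) = e_1, such that the complementary test patterns y^(1), y^(2) satisfy |{i : c_i = 1, y^(2)_i = 0}| = a, |{i : c_i = 0, y^(2)_i = 1}| = b, |{i ∈ E : c_i = 0, y^(1)_i = 1}| = λ, and |{i ∈ E : c_i = 0, y^(1)_i = 0}| = γ, equals C(r,a)·C(n−r,b)·C(n−r−b,λ)·C(b,γ)·C(r−a, e−e_1−γ)·C(a, e_1−λ). -/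

import Mathlib

/-- First test pattern: erasures filled with `p`. -/
def testPattern1 {n : ℕ} (U E : Finset (Fin n)) (p : Fin n → ZMod 2) :
    Fin n → ZMod 2 :=
  fun j => if j ∈ U then 1 else if j ∈ E then p j else 0

/-- Second test pattern: erasures filled with the complementary pattern `1 + p`. -/
def testPattern2 {n : ℕ} (U E : Finset (Fin n)) (p : Fin n → ZMod 2) :
    Fin n → ZMod 2 :=
  fun j => if j ∈ U then 1 else if j ∈ E then 1 + p j else 0

/-- Binomial coefficient with an integer lower argument (zero when negative). -/
def chooseZ (m : ℕ) (k : ℤ) : ℕ := if 0 ≤ k then m.choose k.toNat else 0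

namespace EaedCfg

open Finset

variable {n : ℕ}

/-- support of `c` -/
def sS (c : Fin n → ZMod 2) : Finset (Fin n) := Finset.univ.filter fun i => c i = 1

/-- `A`: positions with `c = 1` and `y² = 0`. -/
def aS (c : Fin n → ZMod 2) (U E : Finset (Fin n)) (p : Fin n → ZMod 2) : Finset (Fin n) :=
  Finset.univ.filter fun i => c i = 1 ∧ testPattern2 U E p i = 0

/-- `B`: positions with `c = 0` and `y² = 1`. -/
def bS (c : Fin n → ZMod 2) (U E : Finset (Fin n)) (p : Fin n → ZMod 2) : Finset (Fin n) :=
  Finset.univ.filter fun i => c i = 0 ∧ testPattern2 U E p i = 1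

/-- `σ`: positions with `c = 1`, `p = 1`. -/
def wS (c : Fin n → ZMod 2) (p : Fin n → ZMod 2) : Finset (Fin n) :=
  Finset.univ.filter fun i => c i = 1 ∧ p i = 1

/-- `τ`: positions with `c = 1`, erased, `p = 0`. -/
def tS (c : Fin n → ZMod 2) (E : Finset (Fin n)) (p : Fin n → ZMod 2) : Finset (Fin n) :=
  Finset.univ.filter fun i => c i = 1 ∧ i ∈ E ∧ p i = 0

/-- `Γ`: positions with `c = 0`, erased, `p = 0`. -/
def gS (c : Fin n → ZMod 2) (E : Finset (Fin n)) (p : Fin n → ZMod 2) : Finset (Fin n) :=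
  Finset.univ.filter fun i => c i = 0 ∧ i ∈ E ∧ p i = 0

/-- `Λ`: positions with `c = 0`, `p = 1`. -/
def lS (c : Fin n → ZMod 2) (p : Fin n → ZMod 2) : Finset (Fin n) :=
  Finset.univ.filter fun i => c i = 0 ∧ p i = 1

def bwdU (c : Fin n → ZMod 2) (A τ B Γ : Finset (Fin n)) : Finset (Fin n) :=
  ((sS c \ A) \ τ) ∪ (B \ Γ)

def bwdE (σ τ Γ Λ : Finset (Fin n)) : Finset (Fin n) := σ ∪ τ ∪ Γ ∪ Λ

def bwdp (σ Λ : Finset (Fin n)) : Fin n → ZMod 2 := fun i => if i ∈ σ ∪ Λ then 1 else 0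

lemma zmod2_cases : ∀ x : ZMod 2, x = 0 ∨ x = 1 := by decide

lemma zmod2_ne_zero : ∀ x : ZMod 2, x ≠ 0 ↔ x = 1 := by decide

lemma zmod2_ne_one : ∀ x : ZMod 2, x ≠ 1 ↔ x = 0 := by decide

lemma zmod2_add_self (x : ZMod 2) : x + x = 0 := by
  rcases zmod2_cases x with h | h <;> simp [h] <;> decide

/-- facts about any member of the configuration set. -/
lemma member_facts (c : Fin n → ZMod 2) (U E : Finset (Fin n)) (p : Fin n → ZMod 2)
    (hdis : Disjoint U E) (hsupp : ∀ i ∉ E, p i = 0) :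
    (E.filter fun i => c i = 0 ∧ testPattern1 U E p i = 1) = lS c p
    ∧ (E.filter fun i => c i = 0 ∧ testPattern1 U E p i = 0) = gS c E p
    ∧ (wS c p).card + (lS c p).card = hammingNorm p
    ∧ (wS c p).card + (tS c E p).card + (gS c E p).card + (lS c p).card = E.card := by
  have hdl := Finset.disjoint_left.mp hdis
  have hp1E : ∀ i, p i = 1 → i ∈ E := by
    intro i hpi
    by_contra hiE
    rw [hsupp i hiE] at hpi
    exact zero_ne_one hpi
  refine ⟨?_, ?_, ?_, ?_⟩
  · ext i
    simp only [mem_filter, lS, Finset.mem_univ, true_and]; simp only [testPattern1]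
    by_cases hiE : i ∈ E
    · have hiU : i ∉ U := fun h => hdl h hiE
      simp only [hiE, hiU, if_false, if_true, true_and]
    · have h0 := hsupp i hiE
      constructor
      · rintro ⟨h, -⟩; exact absurd h hiE
      · rintro ⟨-, h⟩; exact absurd (hp1E i h) hiE
  · ext i
    simp only [mem_filter, gS, Finset.mem_univ, true_and]; simp only [testPattern1]
    by_cases hiE : i ∈ E
    · have hiU : i ∉ U := fun h => hdl h hiE
      simp only [hiE, hiU, if_false, if_true, true_and]
    · constructor
      · rintro ⟨h, -⟩; exact absurd h hiE
      · rintro ⟨-, h, -⟩; exact absurd h hiE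
  · have h1 : (Finset.univ.filter fun i => p i ≠ 0) = Finset.univ.filter fun i => p i = 1 := by
      ext i; simp [zmod2_ne_zero]
    have h2 := Finset.card_filter_add_card_filter_not
      (s := Finset.univ.filter fun i : Fin n => p i = 1) (p := fun i => c i = 1)
    have h3 : (Finset.univ.filter fun i : Fin n => p i = 1).filter (fun i => c i = 1) = wS c p := by
      ext i; simp [wS]; tauto
    have h4 : (Finset.univ.filter fun i : Fin n => p i = 1).filter (fun i => ¬ c i = 1) = lS c p := by
      ext i; simp [lS, zmod2_ne_one]; tauto
    rw [h3, h4] at h2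
    rw [h2]
    unfold hammingNorm
    congr 1
    ext i; simp [zmod2_ne_zero]
  · have h2 := Finset.card_filter_add_card_filter_not (s := E) (p := fun i => c i = 1)
    have h3 := Finset.card_filter_add_card_filter_not
      (s := E.filter fun i => c i = 1) (p := fun i => p i = 1)
    have h4 := Finset.card_filter_add_card_filter_not
      (s := E.filter fun i => ¬ c i = 1) (p := fun i => p i = 1)
    have e1 : (E.filter fun i => c i = 1).filter (fun i => p i = 1) = wS c p := by
      ext i; simp [wS]
      intro h _; exact hp1E i h
    have e2 : (E.filter fun i => c i = 1).filter (fun i => ¬ p i = 1) = tS c E p := by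
      ext i; simp [tS, zmod2_ne_one]; tauto
    have e3 : (E.filter fun i => ¬ c i = 1).filter (fun i => p i = 1) = lS c p := by
      ext i; simp [lS, zmod2_ne_one]
      intro h _; exact hp1E i h
    have e4 : (E.filter fun i => ¬ c i = 1).filter (fun i => ¬ p i = 1) = gS c E p := by
      ext i; simp [gS, zmod2_ne_one, zmod2_ne_one]; tauto
    rw [e1, e2] at h3
    rw [e3, e4] at h4
    omega

lemma bwdp_eq_one (σ Λ : Finset (Fin n)) (i : Fin n) :
    bwdp σ Λ i = 1 ↔ i ∈ σ ∪ Λ := by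
  unfold bwdp
  split_ifs with h
  · simp [h]
  · simp [h]

lemma bwdp_eq_zero (σ Λ : Finset (Fin n)) (i : Fin n) :
    bwdp σ Λ i = 0 ↔ i ∉ σ ∪ Λ := by
  unfold bwdp
  split_ifs with h
  · simp [h]
  · simp [h]

lemma tp2_eq_one (U E : Finset (Fin n)) (p : Fin n → ZMod 2) (hdis : Disjoint U E) (i : Fin n) :
    testPattern2 U E p i = 1 ↔ (i ∈ U ∨ (i ∈ E ∧ p i = 0)) := by
  unfold testPattern2
  split_ifs with h1 h2
  · simp [h1]
  · rcases zmod2_cases (p i) with h | h <;> simp [h, h1, h2] <;> decide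
  · simp [h1, h2]

lemma tp2_eq_zero (U E : Finset (Fin n)) (p : Fin n → ZMod 2) (hdis : Disjoint U E) (i : Fin n) :
    testPattern2 U E p i = 0 ↔ ¬(i ∈ U ∨ (i ∈ E ∧ p i = 0)) := by
  rw [← tp2_eq_one U E p hdis i]
  rcases zmod2_cases (testPattern2 U E p i) with h | h <;> simp [h] <;> decide

set_option maxHeartbeats 2000000 in
/-- The six component sets of the backward map, plus disjointness and support. -/
lemma bwd_eq (c : Fin n → ZMod 2) (A σ τ B Γ Λ : Finset (Fin n))
    (hAS : A ⊆ sS c) (hσA : σ ⊆ A) (hτ : τ ⊆ sS c \ A)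
    (hBS : B ⊆ (sS c)ᶜ) (hΓB : Γ ⊆ B) (hΛ : Λ ⊆ (sS c)ᶜ \ B) :
    Disjoint (bwdU c A τ B Γ) (bwdE σ τ Γ Λ) ∧
    (∀ i ∉ bwdE σ τ Γ Λ, bwdp σ Λ i = 0) ∧
    aS c (bwdU c A τ B Γ) (bwdE σ τ Γ Λ) (bwdp σ Λ) = A ∧
    wS c (bwdp σ Λ) = σ ∧
    tS c (bwdE σ τ Γ Λ) (bwdp σ Λ) = τ ∧
    bS c (bwdU c A τ B Γ) (bwdE σ τ Γ Λ) (bwdp σ Λ) = B ∧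
    gS c (bwdE σ τ Γ Λ) (bwdp σ Λ) = Γ ∧
    lS c (bwdp σ Λ) = Λ := by
  have fA : ∀ i ∈ A, c i = 1 := by intro i hi; have := hAS hi; simpa [sS] using this
  have fσ : ∀ i ∈ σ, i ∈ A := fun i hi => hσA hi
  have fτ : ∀ i ∈ τ, c i = 1 ∧ i ∉ A := by
    intro i hi; have := hτ hi; simp [sS] at this; tauto
  have fB : ∀ i ∈ B, c i = 0 := by
    intro i hi; have := hBS hi; simp [sS] at this
    rcases zmod2_cases (c i) with h | h
    · exact h
    · exact absurd h this
  have fΛ : ∀ i ∈ Λ, c i = 0 ∧ i ∉ B := by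
    intro i hi; have := hΛ hi; simp [sS] at this
    rcases zmod2_cases (c i) with h | h
    · exact ⟨h, this.2⟩
    · exact absurd h this.1
  have fΓ : ∀ i ∈ Γ, i ∈ B := fun i hi => hΓB hi
  have fc : ∀ i : Fin n, ¬(c i = 0 ∧ c i = 1) := by
    rintro i ⟨h0, h1⟩; rw [h0] at h1; exact zero_ne_one h1
  have hdis : Disjoint (bwdU c A τ B Γ) (bwdE σ τ Γ Λ) := by
    rw [Finset.disjoint_left]
    intro i hiU hiE
    simp only [bwdU, bwdE, Finset.mem_union, Finset.mem_sdiff, sS, Finset.mem_filter,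
      Finset.mem_univ, true_and] at hiU hiE
    rcases hiU with ⟨⟨hc1, hnA⟩, hnτ⟩ | ⟨hB', hnΓ⟩
    · rcases hiE with ((h | h) | h) | h
      · exact hnA (fσ i h)
      · exact hnτ h
      · exact fc i ⟨fB i (fΓ i h), hc1⟩
      · exact fc i ⟨(fΛ i h).1, hc1⟩
    · have hc0 := fB i hB'
      rcases hiE with ((h | h) | h) | h
      · exact fc i ⟨hc0, fA i (fσ i h)⟩
      · exact fc i ⟨hc0, (fτ i h).1⟩
      · exact hnΓ h
      · exact (fΛ i h).2 hB'
  have hsupp : ∀ i ∉ bwdE σ τ Γ Λ, bwdp σ Λ i = 0 := by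
    intro i hi
    rw [bwdp_eq_zero]
    intro hmem
    apply hi
    simp only [bwdE, Finset.mem_union]
    simp only [Finset.mem_union] at hmem
    tauto
  have hy2 := tp2_eq_one (bwdU c A τ B Γ) (bwdE σ τ Γ Λ) (bwdp σ Λ) hdis
  have hy2' := tp2_eq_zero (bwdU c A τ B Γ) (bwdE σ τ Γ Λ) (bwdp σ Λ) hdis
  have hU' : ∀ i, i ∈ bwdU c A τ B Γ ↔ ((c i = 1 ∧ i ∉ A ∧ i ∉ τ) ∨ (i ∈ B ∧ i ∉ Γ)) := by
    intro i
    simp only [bwdU, Finset.mem_union, Finset.mem_sdiff, sS, Finset.mem_filter,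
      Finset.mem_univ, true_and, and_assoc]
  have hE' : ∀ i, i ∈ bwdE σ τ Γ Λ ↔ (i ∈ σ ∨ i ∈ τ ∨ i ∈ Γ ∨ i ∈ Λ) := by
    intro i
    simp only [bwdE, Finset.mem_union, or_assoc]
  have hp1 : ∀ i, bwdp σ Λ i = 1 ↔ (i ∈ σ ∨ i ∈ Λ) := by
    intro i; rw [bwdp_eq_one]; simp only [Finset.mem_union]
  have hp0 : ∀ i, bwdp σ Λ i = 0 ↔ ¬(i ∈ σ ∨ i ∈ Λ) := by
    intro i; rw [bwdp_eq_zero]; simp only [Finset.mem_union]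
  refine ⟨hdis, hsupp, ?_, ?_, ?_, ?_, ?_, ?_⟩
  · ext i
    have h1 := fA i; have h2 := fσ i; have h3 := fτ i; have h4 := fB i
    have h5 := fΛ i; have h6 := fΓ i; have h7 := fc i
    simp only [aS, Finset.mem_filter, Finset.mem_univ, true_and, hy2' i, hU', hE', hp0]
    tauto
  · ext i
    have h1 := fA i; have h2 := fσ i; have h3 := fτ i; have h4 := fB i
    have h5 := fΛ i; have h6 := fΓ i; have h7 := fc i
    simp only [wS, Finset.mem_filter, Finset.mem_univ, true_and, hp1]
    tauto
  · ext i
    have h1 := fA i; have h2 := fσ i; have h3 := fτ i; have h4 := fB i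
    have h5 := fΛ i; have h6 := fΓ i; have h7 := fc i
    simp only [tS, Finset.mem_filter, Finset.mem_univ, true_and, hE', hp0]
    tauto
  · ext i
    have h1 := fA i; have h2 := fσ i; have h3 := fτ i; have h4 := fB i
    have h5 := fΛ i; have h6 := fΓ i; have h7 := fc i
    simp only [bS, Finset.mem_filter, Finset.mem_univ, true_and, hy2 i, hU', hE', hp0]
    tauto
  · ext i
    have h1 := fA i; have h2 := fσ i; have h3 := fτ i; have h4 := fB i
    have h5 := fΛ i; have h6 := fΓ i; have h7 := fc i
    simp only [gS, Finset.mem_filter, Finset.mem_univ, true_and, hE', hp0]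
    tauto
  · ext i
    have h1 := fA i; have h2 := fσ i; have h3 := fτ i; have h4 := fB i
    have h5 := fΛ i; have h6 := fΓ i; have h7 := fc i
    simp only [lS, Finset.mem_filter, Finset.mem_univ, true_and, hp1]
    tauto

lemma card_sigma_const {α : Type*} {β : α → Type*} (X : Finset α) (Y : ∀ a, Finset (β a)) (k : ℕ)
    (h : ∀ x ∈ X, (Y x).card = k) : (X.sigma Y).card = X.card * k := by
  rw [Finset.card_sigma, Finset.sum_congr rfl h, Finset.sum_const, smul_eq_mul]

lemma hammingNorm_eq (p : Fin n → ZMod 2) :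
    hammingNorm p = (Finset.univ.filter fun i => p i = 1).card := by
  unfold hammingNorm
  congr 1
  ext i
  simp [zmod2_ne_zero]

set_option maxHeartbeats 1000000 in
lemma fwd_inv_U (c : Fin n → ZMod 2) (U E : Finset (Fin n)) (p : Fin n → ZMod 2)
    (hdis : Disjoint U E) (hsupp : ∀ i ∉ E, p i = 0) :
    bwdU c (aS c U E p) (tS c E p) (bS c U E p) (gS c E p) = U := by
  have hdl := Finset.disjoint_left.mp hdis
  ext i
  have hy1 := tp2_eq_one U E p hdis i
  have hy0 := tp2_eq_zero U E p hdis i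
  have c01 := zmod2_cases (c i)
  have y01 := zmod2_cases (testPattern2 U E p i)
  simp only [bwdU, Finset.mem_union, Finset.mem_sdiff, sS, aS, tS, bS, gS,
    Finset.mem_filter, Finset.mem_univ, true_and]
  constructor
  · rintro (⟨⟨hc1, hnA⟩, hnτ⟩ | ⟨⟨hc0, hy⟩, hnΓ⟩)
    · have hyv : testPattern2 U E p i = 1 := by
        rcases y01 with h | h
        · exact absurd ⟨hc1, h⟩ hnA
        · exact h
      rcases hy1.mp hyv with h | ⟨hE', hp0⟩
      · exact h
      · exact absurd ⟨hc1, hE', hp0⟩ hnτ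
    · rcases hy1.mp hy with h | ⟨hE', hp0⟩
      · exact h
      · exact absurd ⟨hc0, hE', hp0⟩ hnΓ
  · intro hiU
    have hnE : i ∉ E := fun h => hdl hiU h
    have hyv : testPattern2 U E p i = 1 := hy1.mpr (Or.inl hiU)
    rcases c01 with hc0 | hc1
    · right
      refine ⟨⟨hc0, hyv⟩, ?_⟩
      rintro ⟨-, hE', -⟩
      exact hnE hE'
    · left
      refine ⟨⟨hc1, ?_⟩, ?_⟩
      · rintro ⟨-, h0⟩
        rw [hyv] at h0
        exact one_ne_zero h0
      · rintro ⟨-, hE', -⟩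
        exact hnE hE'

set_option maxHeartbeats 1000000 in
lemma fwd_inv_E (c : Fin n → ZMod 2) (U E : Finset (Fin n)) (p : Fin n → ZMod 2)
    (hdis : Disjoint U E) (hsupp : ∀ i ∉ E, p i = 0) :
    bwdE (wS c p) (tS c E p) (gS c E p) (lS c p) = E := by
  have hp1E : ∀ i, p i = 1 → i ∈ E := by
    intro i hpi
    by_contra hiE
    rw [hsupp i hiE] at hpi
    exact zero_ne_one hpi
  ext i
  have c01 := zmod2_cases (c i)
  have p01 := zmod2_cases (p i)
  simp only [bwdE, Finset.mem_union, wS, tS, gS, lS, Finset.mem_filter,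
    Finset.mem_univ, true_and]
  constructor
  · rintro (((⟨-, h⟩ | ⟨-, h, -⟩) | ⟨-, h, -⟩) | ⟨-, h⟩)
    · exact hp1E i h
    · exact h
    · exact h
    · exact hp1E i h
  · intro hiE
    rcases c01 with hc | hc <;> rcases p01 with hp | hp
    · left; right; exact ⟨hc, hiE, hp⟩
    · right; exact ⟨hc, hp⟩
    · left; left; right; exact ⟨hc, hiE, hp⟩
    · left; left; left; exact ⟨hc, hp⟩

set_option maxHeartbeats 1000000 in
lemma fwd_inv_p (c : Fin n → ZMod 2) (E : Finset (Fin n)) (p : Fin n → ZMod 2) :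
    bwdp (wS c p) (lS c p) = p := by
  funext i
  rcases zmod2_cases (p i) with h | h
  · rw [h, bwdp_eq_zero]
    simp [wS, lS, h]
  · rw [h, bwdp_eq_one]
    simp only [Finset.mem_union, wS, lS, Finset.mem_filter, Finset.mem_univ,
      true_and, h, and_true]
    rcases zmod2_cases (c i) with hc' | hc' <;> simp [hc']

end EaedCfg

set_option maxHeartbeats 4000000 in
theorem eaed_configuration_count {n : ℕ} (c : Fin n → ZMod 2)
    (u e e₁ r a b lam gam : ℕ) (hc : hammingNorm c = r)
    (hconstraint : (r : ℤ) + b = u + e - e₁ + a) :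
    (Finset.univ.filter
        (fun T : Finset (Fin n) × Finset (Fin n) × (Fin n → ZMod 2) =>
          T.1.card = u ∧ T.2.1.card = e ∧ Disjoint T.1 T.2.1 ∧
          (∀ i ∉ T.2.1, T.2.2 i = 0) ∧ hammingNorm T.2.2 = e₁ ∧
          (Finset.univ.filter
            (fun i => c i = 1 ∧ testPattern2 T.1 T.2.1 T.2.2 i = 0)).card = a ∧
          (Finset.univ.filter
            (fun i => c i = 0 ∧ testPattern2 T.1 T.2.1 T.2.2 i = 1)).card = b ∧
          (T.2.1.filter
            (fun i => c i = 0 ∧ testPattern1 T.1 T.2.1 T.2.2 i = 1)).card = lam ∧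
          (T.2.1.filter
            (fun i => c i = 0 ∧ testPattern1 T.1 T.2.1 T.2.2 i = 0)).card = gam)).card =
      r.choose a * (n - r).choose b * (n - r - b).choose lam * b.choose gam *
        chooseZ (r - a) ((e : ℤ) - e₁ - gam) * chooseZ a ((e₁ : ℤ) - lam) := by
  classical
  open Finset EaedCfg in
  by_cases hdeg : lam ≤ e₁ ∧ e₁ + gam ≤ e
  · obtain ⟨hlamle, hgamle⟩ := hdeg
    have hScard : (sS c).card = r := by
      rw [← hc]
      unfold hammingNorm sS
      congr 1
      ext i
      simp [zmod2_ne_zero]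
    have hSccard : ((sS c)ᶜ).card = n - r := by
      rw [Finset.card_compl, hScard, Fintype.card_fin]
    have hcz1 : chooseZ (r - a) ((e : ℤ) - e₁ - gam) = (r - a).choose (e - e₁ - gam) := by
      rw [chooseZ, if_pos (by omega)]
      congr 1
      omega
    have hcz2 : chooseZ a ((e₁ : ℤ) - lam) = a.choose (e₁ - lam) := by
      rw [chooseZ, if_pos (by omega)]
      congr 1
      omega
    have hWcard : ((((sS c)ᶜ).powersetCard b).sigma fun B =>
          (B.powersetCard gam).sigma fun _ =>
            (((sS c)ᶜ) \ B).powersetCard lam).card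
        = (n - r).choose b * (b.choose gam * (n - r - b).choose lam) := by
      have inner : ∀ B ∈ ((sS c)ᶜ).powersetCard b,
          ((B.powersetCard gam).sigma fun _ => (((sS c)ᶜ) \ B).powersetCard lam).card
            = b.choose gam * (n - r - b).choose lam := by
        intro B hB
        obtain ⟨hBS, hBc⟩ := Finset.mem_powersetCard.mp hB
        have h2 : ∀ Γ ∈ B.powersetCard gam,
            ((((sS c)ᶜ) \ B).powersetCard lam).card = (n - r - b).choose lam := by
          intro Γ _
          rw [Finset.card_powersetCard, Finset.card_sdiff_of_subset hBS, hSccard, hBc]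
        rw [card_sigma_const _ _ _ h2, Finset.card_powersetCard, hBc]
      rw [card_sigma_const _ _ _ inner, Finset.card_powersetCard, hSccard]
    have hYcard : (((sS c).powersetCard a).sigma fun A =>
          (A.powersetCard (e₁ - lam)).sigma fun _ =>
            (((sS c) \ A).powersetCard (e - e₁ - gam)).sigma fun _ =>
              (((sS c)ᶜ).powersetCard b).sigma fun B =>
                (B.powersetCard gam).sigma fun _ =>
                  (((sS c)ᶜ) \ B).powersetCard lam).card
        = r.choose a * (a.choose (e₁ - lam) * ((r - a).choose (e - e₁ - gam) *
            ((n - r).choose b * (b.choose gam * (n - r - b).choose lam)))) := by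
      have innerA : ∀ A ∈ (sS c).powersetCard a,
          ((A.powersetCard (e₁ - lam)).sigma fun _ =>
            (((sS c) \ A).powersetCard (e - e₁ - gam)).sigma fun _ =>
              (((sS c)ᶜ).powersetCard b).sigma fun B =>
                (B.powersetCard gam).sigma fun _ =>
                  (((sS c)ᶜ) \ B).powersetCard lam).card
            = a.choose (e₁ - lam) * ((r - a).choose (e - e₁ - gam) *
                ((n - r).choose b * (b.choose gam * (n - r - b).choose lam))) := by
        intro A hA
        obtain ⟨hAS, hAc⟩ := Finset.mem_powersetCard.mp hA
        have h2 : ∀ σ ∈ A.powersetCard (e₁ - lam),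
            ((((sS c) \ A).powersetCard (e - e₁ - gam)).sigma fun _ =>
              (((sS c)ᶜ).powersetCard b).sigma fun B =>
                (B.powersetCard gam).sigma fun _ =>
                  (((sS c)ᶜ) \ B).powersetCard lam).card
              = (r - a).choose (e - e₁ - gam) *
                  ((n - r).choose b * (b.choose gam * (n - r - b).choose lam)) := by
          intro σ _
          have h3 : ∀ τ ∈ ((sS c) \ A).powersetCard (e - e₁ - gam),
              ((((sS c)ᶜ).powersetCard b).sigma fun B =>
                (B.powersetCard gam).sigma fun _ =>
                  (((sS c)ᶜ) \ B).powersetCard lam).card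
                = (n - r).choose b * (b.choose gam * (n - r - b).choose lam) :=
            fun τ _ => hWcard
          rw [card_sigma_const _ _ _ h3, Finset.card_powersetCard,
            Finset.card_sdiff_of_subset hAS, hScard, hAc]
        rw [card_sigma_const _ _ _ h2, Finset.card_powersetCard, hAc]
      rw [card_sigma_const _ _ _ innerA, Finset.card_powersetCard, hScard]
    have hbij : (Finset.univ.filter
        (fun T : Finset (Fin n) × Finset (Fin n) × (Fin n → ZMod 2) =>
          T.1.card = u ∧ T.2.1.card = e ∧ Disjoint T.1 T.2.1 ∧
          (∀ i ∉ T.2.1, T.2.2 i = 0) ∧ hammingNorm T.2.2 = e₁ ∧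
          (Finset.univ.filter
            (fun i => c i = 1 ∧ testPattern2 T.1 T.2.1 T.2.2 i = 0)).card = a ∧
          (Finset.univ.filter
            (fun i => c i = 0 ∧ testPattern2 T.1 T.2.1 T.2.2 i = 1)).card = b ∧
          (T.2.1.filter
            (fun i => c i = 0 ∧ testPattern1 T.1 T.2.1 T.2.2 i = 1)).card = lam ∧
          (T.2.1.filter
            (fun i => c i = 0 ∧ testPattern1 T.1 T.2.1 T.2.2 i = 0)).card = gam)).card
        = (((sS c).powersetCard a).sigma fun A =>
          (A.powersetCard (e₁ - lam)).sigma fun _ =>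
            (((sS c) \ A).powersetCard (e - e₁ - gam)).sigma fun _ =>
              (((sS c)ᶜ).powersetCard b).sigma fun B =>
                (B.powersetCard gam).sigma fun _ =>
                  (((sS c)ᶜ) \ B).powersetCard lam).card := by
      refine Finset.card_bij'
        (fun T _ => ⟨aS c T.1 T.2.1 T.2.2, wS c T.2.2, tS c T.2.1 T.2.2,
          bS c T.1 T.2.1 T.2.2, gS c T.2.1 T.2.2, lS c T.2.2⟩)
        (fun Q _ => (bwdU c Q.1 Q.2.2.1 Q.2.2.2.1 Q.2.2.2.2.1,
          bwdE Q.2.1 Q.2.2.1 Q.2.2.2.2.1 Q.2.2.2.2.2, bwdp Q.2.1 Q.2.2.2.2.2))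
        ?_ ?_ ?_ ?_
      · -- forward membership
        rintro ⟨U, E, p⟩ hT
        simp only [Finset.mem_filter, Finset.mem_univ, true_and] at hT
        obtain ⟨hU, hE, hdis, hsupp, hnorm, ha, hb, hlam, hgam⟩ := hT
        have hdl := Finset.disjoint_left.mp hdis
        have hp1E : ∀ i, p i = 1 → i ∈ E := by
          intro i hpi
          by_contra hiE
          rw [hsupp i hiE] at hpi
          exact zero_ne_one hpi
        obtain ⟨m1, m2, m3, m4⟩ := member_facts c U E p hdis hsupp
        rw [m1] at hlam
        rw [m2] at hgam
        rw [hnorm] at m3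
        rw [hE] at m4
        have fc : ∀ i : Fin n, ¬(c i = 0 ∧ c i = 1) := by
          rintro i ⟨h0, h1⟩; rw [h0] at h1; exact zero_ne_one h1
        simp only [Finset.mem_sigma, Finset.mem_powersetCard]
        refine ⟨⟨?_, ha⟩, ⟨?_, by omega⟩, ⟨?_, by omega⟩, ⟨?_, hb⟩, ⟨?_, hgam⟩, ?_, hlam⟩
        · intro i hi
          simp only [aS, sS, Finset.mem_filter, Finset.mem_univ, true_and] at *
          exact hi.1
        · intro i hi
          simp only [wS, Finset.mem_filter, Finset.mem_univ, true_and] at hi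
          obtain ⟨hc1, hp1⟩ := hi
          have hiE := hp1E i hp1
          have hiU : i ∉ U := fun h => hdl h hiE
          simp only [aS, Finset.mem_filter, Finset.mem_univ, true_and]
          refine ⟨hc1, ?_⟩
          rw [tp2_eq_zero U E p hdis]
          rintro (h | ⟨-, h⟩)
          · exact hiU h
          · rw [hp1] at h; exact one_ne_zero h
        · intro i hi
          simp only [tS, Finset.mem_filter, Finset.mem_univ, true_and] at hi
          obtain ⟨hc1, hiE, hp0⟩ := hi
          simp only [Finset.mem_sdiff, sS, aS, Finset.mem_filter, Finset.mem_univ, true_and]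
          refine ⟨hc1, ?_⟩
          rintro ⟨-, h0⟩
          rw [tp2_eq_zero U E p hdis] at h0
          exact h0 (Or.inr ⟨hiE, hp0⟩)
        · intro i hi
          simp only [bS, Finset.mem_filter, Finset.mem_univ, true_and] at hi
          simp only [Finset.mem_compl, sS, Finset.mem_filter, Finset.mem_univ, true_and]
          exact fun h1 => fc i ⟨hi.1, h1⟩
        · intro i hi
          simp only [gS, Finset.mem_filter, Finset.mem_univ, true_and] at hi
          obtain ⟨hc0, hiE, hp0⟩ := hi
          simp only [bS, Finset.mem_filter, Finset.mem_univ, true_and]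
          exact ⟨hc0, (tp2_eq_one U E p hdis i).mpr (Or.inr ⟨hiE, hp0⟩)⟩
        · intro i hi
          simp only [lS, Finset.mem_filter, Finset.mem_univ, true_and] at hi
          obtain ⟨hc0, hp1⟩ := hi
          have hiE := hp1E i hp1
          have hiU : i ∉ U := fun h => hdl h hiE
          simp only [Finset.mem_sdiff, Finset.mem_compl, sS, bS, Finset.mem_filter,
            Finset.mem_univ, true_and]
          refine ⟨fun h1 => fc i ⟨hc0, h1⟩, ?_⟩
          rintro ⟨-, h1⟩
          rw [tp2_eq_one U E p hdis] at h1
          rcases h1 with h | ⟨-, h⟩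
          · exact hiU h
          · rw [hp1] at h; exact one_ne_zero h
      · -- backward membership
        rintro ⟨A, σ, τ, B, Γ, Λ⟩ hQ
        simp only [Finset.mem_sigma, Finset.mem_powersetCard] at hQ
        obtain ⟨⟨hAS, hAc⟩, ⟨hσA, hσc⟩, ⟨hτS, hτc⟩, ⟨hBS, hBc⟩, ⟨hΓB, hΓc⟩, hΛS, hΛc⟩ := hQ
        obtain ⟨hdis', hsupp', eA, eσ, eτ, eB, eΓ, eΛ⟩ := bwd_eq c A σ τ B Γ Λ hAS hσA hτS hBS hΓB hΛS
        have haR : a ≤ r := by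
          have := Finset.card_le_card hAS; rwa [hAc, hScard] at this
        have htR : e - e₁ - gam ≤ r - a := by
          have := Finset.card_le_card hτS
          rwa [hτc, Finset.card_sdiff_of_subset hAS, hScard, hAc] at this
        have hgb : gam ≤ b := by
          have := Finset.card_le_card hΓB; rwa [hΓc, hBc] at this
        have hσS : σ ⊆ sS c := hσA.trans hAS
        have hτS' : τ ⊆ sS c := fun i h => (Finset.mem_sdiff.mp (hτS h)).1
        have hΓS : Γ ⊆ (sS c)ᶜ := hΓB.trans hBS
        have hΛS' : Λ ⊆ (sS c)ᶜ := fun i h => (Finset.mem_sdiff.mp (hΛS h)).1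
        have dcomp : ∀ {X Y' : Finset (Fin n)}, X ⊆ sS c → Y' ⊆ (sS c)ᶜ → Disjoint X Y' := by
          intro X Y' h1 h2
          rw [Finset.disjoint_left]
          intro i hiX hiY
          exact (Finset.mem_compl.mp (h2 hiY)) (h1 hiX)
        have dστ : Disjoint σ τ := by
          rw [Finset.disjoint_left]
          intro i hi h2
          exact (Finset.mem_sdiff.mp (hτS h2)).2 (hσA hi)
        have dστΓ : Disjoint (σ ∪ τ) Γ := dcomp (Finset.union_subset hσS hτS') hΓS
        have dΓΛ : Disjoint Γ Λ := by
          rw [Finset.disjoint_left]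
          intro i hi h2
          exact (Finset.mem_sdiff.mp (hΛS h2)).2 (hΓB hi)
        have dΛ : Disjoint ((σ ∪ τ) ∪ Γ) Λ := by
          rw [Finset.disjoint_union_left]
          exact ⟨dcomp (Finset.union_subset hσS hτS') hΛS', dΓΛ⟩
        have cardE' : (bwdE σ τ Γ Λ).card = e := by
          show ((σ ∪ τ ∪ Γ) ∪ Λ).card = e
          rw [Finset.card_union_of_disjoint dΛ, Finset.card_union_of_disjoint dστΓ,
            Finset.card_union_of_disjoint dστ, hσc, hτc, hΓc, hΛc]
          omega
        have cardU' : (bwdU c A τ B Γ).card = u := by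
          show (((sS c \ A) \ τ) ∪ (B \ Γ)).card = u
          have d1 : Disjoint ((sS c \ A) \ τ) (B \ Γ) :=
            dcomp (Finset.sdiff_subset.trans Finset.sdiff_subset)
              (Finset.sdiff_subset.trans hBS)
          rw [Finset.card_union_of_disjoint d1, Finset.card_sdiff_of_subset hτS,
            Finset.card_sdiff_of_subset hAS, Finset.card_sdiff_of_subset hΓB, hScard, hAc, hτc, hΓc, hBc]
          omega
        have norm' : hammingNorm (bwdp σ Λ) = e₁ := by
          rw [hammingNorm_eq]
          have hfe : (Finset.univ.filter fun i => bwdp σ Λ i = 1) = σ ∪ Λ := by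
            ext i
            simp [bwdp_eq_one]
          rw [hfe, Finset.card_union_of_disjoint (dcomp hσS hΛS'), hσc, hΛc]
          omega
        obtain ⟨p1, p2, -, -⟩ :=
          member_facts c (bwdU c A τ B Γ) (bwdE σ τ Γ Λ) (bwdp σ Λ) hdis' hsupp'
        simp only [Finset.mem_filter, Finset.mem_univ, true_and]
        refine ⟨cardU', cardE', hdis', hsupp', norm', ?_, ?_, ?_, ?_⟩
        · show (aS c (bwdU c A τ B Γ) (bwdE σ τ Γ Λ) (bwdp σ Λ)).card = a
          rw [eA, hAc]
        · show (bS c (bwdU c A τ B Γ) (bwdE σ τ Γ Λ) (bwdp σ Λ)).card = b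
          rw [eB, hBc]
        · rw [p1, eΛ, hΛc]
        · rw [p2, eΓ, hΓc]
      · -- left inverse
        rintro ⟨U, E, p⟩ hT
        simp only [Finset.mem_filter, Finset.mem_univ, true_and] at hT
        obtain ⟨hU, hE, hdis, hsupp, hnorm, ha, hb, hlam, hgam⟩ := hT
        have hdl := Finset.disjoint_left.mp hdis
        have hp1E : ∀ i, p i = 1 → i ∈ E := by
          intro i hpi
          by_contra hiE
          rw [hsupp i hiE] at hpi
          exact zero_ne_one hpi
        simp only [Prod.mk.injEq]
        exact ⟨fwd_inv_U c U E p hdis hsupp, fwd_inv_E c U E p hdis hsupp,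
          fwd_inv_p c E p⟩
      · -- right inverse
        rintro ⟨A, σ, τ, B, Γ, Λ⟩ hQ
        simp only [Finset.mem_sigma, Finset.mem_powersetCard] at hQ
        obtain ⟨⟨hAS, hAc⟩, ⟨hσA, hσc⟩, ⟨hτS, hτc⟩, ⟨hBS, hBc⟩, ⟨hΓB, hΓc⟩, hΛS, hΛc⟩ := hQ
        obtain ⟨-, -, eA, eσ, eτ, eB, eΓ, eΛ⟩ := bwd_eq c A σ τ B Γ Λ hAS hσA hτS hBS hΓB hΛS
        dsimp only
        rw [eA, eσ, eτ, eB, eΓ, eΛ]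
    rw [hbij, hYcard, hcz1, hcz2]
    ring
  · -- degenerate case: both sides are zero
    have hL : (Finset.univ.filter
        (fun T : Finset (Fin n) × Finset (Fin n) × (Fin n → ZMod 2) =>
          T.1.card = u ∧ T.2.1.card = e ∧ Disjoint T.1 T.2.1 ∧
          (∀ i ∉ T.2.1, T.2.2 i = 0) ∧ hammingNorm T.2.2 = e₁ ∧
          (Finset.univ.filter
            (fun i => c i = 1 ∧ testPattern2 T.1 T.2.1 T.2.2 i = 0)).card = a ∧
          (Finset.univ.filter
            (fun i => c i = 0 ∧ testPattern2 T.1 T.2.1 T.2.2 i = 1)).card = b ∧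
          (T.2.1.filter
            (fun i => c i = 0 ∧ testPattern1 T.1 T.2.1 T.2.2 i = 1)).card = lam ∧
          (T.2.1.filter
            (fun i => c i = 0 ∧ testPattern1 T.1 T.2.1 T.2.2 i = 0)).card = gam)) = ∅ := by
      rw [Finset.filter_eq_empty_iff]
      rintro ⟨U, E, p⟩ -
      rintro ⟨hU, hE, hdis, hsupp, hnorm, ha, hb, hlam, hgam⟩
      obtain ⟨m1, m2, m3, m4⟩ := EaedCfg.member_facts c U E p hdis hsupp
      rw [m1] at hlam
      rw [m2] at hgam
      rw [hnorm] at m3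
      rw [hE] at m4
      exact hdeg (by omega)
    rw [hL, Finset.card_empty]
    rcases not_and_or.mp hdeg with h | h
    · have : chooseZ a ((e₁ : ℤ) - lam) = 0 := by
        rw [chooseZ, if_neg (by omega)]
      rw [this, mul_zero]
    · have : chooseZ (r - a) ((e : ℤ) - e₁ - gam) = 0 := by
        rw [chooseZ, if_neg (by omega)]
      rw [this, mul_zero, zero_mul]
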